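/- Let Φ be a d×d real matrix and suppose W_1,…,W_L are d×d real matrices that are block-decomposed by orthogonal matrices U_1,…,U_L, V_1,…,V_L with data W̃_1,…,W̃_L and ρ_1,…,ρ_L as in the context. Then for every l ∈ {1,…,L}: U_{l,1}ᵀ·[(W_L⋯W_{l+1})ᵀ·(W_L·W_{L−1}⋯W_1 − Φ)·(W_{l−1}⋯W_1)ᵀ]·V_{l,1} = (W̃_L⋯W̃_{l+1})ᵀ·(W̃_L·W̃_{L−1}⋯W̃_1 − U_{L,1}ᵀ·Φ·V_{1,1})·(W̃_{l−1}⋯W̃_1)ᵀ, where empty products of d×d matrices equal I_d and empty products of 2r×2r matrices equal I_{2r}. -/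
import Mathlib


open Matrix BigOperators Filter

noncomputable section

/-- Auxiliary: product of `k` consecutive matrices ending (on the right) at index `i`. -/
def chainAux {n : Type*} [Fintype n] [DecidableEq n]
    (W : ℕ → Matrix n n ℝ) (i : ℕ) : ℕ → Matrix n n ℝ
  | 0 => 1
  | (k+1) => W (i + k) * chainAux W i k

/-- `chain W i j = W j * W (j-1) * ⋯ * W i`; equals `1` when `j < i` (empty product). -/
def chain {n : Type*} [Fintype n] [DecidableEq n]
    (W : ℕ → Matrix n n ℝ) (i j : ℕ) : Matrix n n ℝ :=
  chainAux W i (j + 1 - i)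

/-- `blockDiag r m A B` is the `(2r+m)×(2r+m)` block-diagonal matrix `diag(A, B)`
with top-left block `A` (of size `2r×2r`) and bottom-right block `B` (of size `m×m`). -/
def blockDiag (r m : ℕ) (A : Matrix (Fin (2*r)) (Fin (2*r)) ℝ)
    (B : Matrix (Fin m) (Fin m) ℝ) : Matrix (Fin (2*r + m)) (Fin (2*r + m)) ℝ :=
  Matrix.reindex finSumFinEquiv finSumFinEquiv (Matrix.fromBlocks A 0 0 B)

/-- The `d×2r` matrix formed by the first `2r` columns of a `(2r+m)×(2r+m)` matrix. -/
def cols1 (r m : ℕ) (U : Matrix (Fin (2*r + m)) (Fin (2*r + m)) ℝ) :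
    Matrix (Fin (2*r + m)) (Fin (2*r)) ℝ :=
  fun i j => U i (Fin.castAdd m j)

/-- The `d×m` matrix formed by the last `m` columns of a `(2r+m)×(2r+m)` matrix. -/
def cols2 (r m : ℕ) (U : Matrix (Fin (2*r + m)) (Fin (2*r + m)) ℝ) :
    Matrix (Fin (2*r + m)) (Fin m) ℝ :=
  fun i j => U i (Fin.natAdd (2*r) j)

/-- Squared Frobenius norm: `‖A‖_F² = trace(AᵀA)`. -/
def frobSq {p q : Type*} [Fintype p] [Fintype q] (A : Matrix p q ℝ) : ℝ :=
  Matrix.trace (Aᵀ * A)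

/-- Frobenius norm: `‖A‖_F = √(trace(AᵀA))`. -/
def frobNorm {p q : Type*} [Fintype p] [Fintype q] (A : Matrix p q ℝ) : ℝ :=
  Real.sqrt (Matrix.trace (Aᵀ * A))

variable {n : Type*} [Fintype n] [DecidableEq n]

lemma chain_empty (W : ℕ → Matrix n n ℝ) {i j : ℕ} (h : j + 1 ≤ i) : chain W i j = 1 := by
  unfold chain
  have h0 : j + 1 - i = 0 := by omega
  rw [h0]; rfl

lemma chain_succ (W : ℕ → Matrix n n ℝ) {i j : ℕ} (h : i ≤ j + 1) :
    chain W i (j + 1) = W (j + 1) * chain W i j := by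
  unfold chain
  have h1 : j + 1 + 1 - i = (j + 1 - i) + 1 := by omega
  rw [h1, chainAux, show i + (j + 1 - i) = j + 1 from by omega]

lemma chain_self (W : ℕ → Matrix n n ℝ) (i : ℕ) : chain W i i = W i := by
  unfold chain
  have h1 : i + 1 - i = 1 := by omega
  rw [h1, chainAux, chainAux]
  simp

variable {r m : ℕ}

lemma blockDiag_mul (A A' : Matrix (Fin (2*r)) (Fin (2*r)) ℝ) (B B' : Matrix (Fin m) (Fin m) ℝ) :
    blockDiag r m A B * blockDiag r m A' B' = blockDiag r m (A * A') (B * B') := by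
  unfold _root_.blockDiag
  rw [reindex_apply, reindex_apply, reindex_apply, submatrix_mul_equiv, fromBlocks_multiply]
  simp

lemma blockDiag_one : blockDiag r m 1 1 = (1 : Matrix (Fin (2*r+m)) (Fin (2*r+m)) ℝ) := by
  unfold _root_.blockDiag
  rw [reindex_apply, fromBlocks_one, submatrix_one_equiv]

lemma blockDiag_transpose (A : Matrix (Fin (2*r)) (Fin (2*r)) ℝ) (B : Matrix (Fin m) (Fin m) ℝ) :
    (blockDiag r m A B)ᵀ = blockDiag r m Aᵀ Bᵀ := by
  unfold _root_.blockDiag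
  rw [reindex_apply, reindex_apply, transpose_submatrix, fromBlocks_transpose]
  simp

def Emat (r m : ℕ) : Matrix (Fin (2*r+m)) (Fin (2*r)) ℝ :=
  fun i j => if i = Fin.castAdd m j then 1 else 0

lemma cols1_eq (X : Matrix (Fin (2*r+m)) (Fin (2*r+m)) ℝ) : cols1 r m X = X * Emat r m := by
  ext i j
  simp [cols1, Emat, Matrix.mul_apply]

lemma Emat_tE : (Emat r m)ᵀ * Emat r m = (1 : Matrix (Fin (2*r)) (Fin (2*r)) ℝ) := by
  ext i j
  simp [Emat, Matrix.mul_apply, Matrix.one_apply, eq_comm]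

lemma blockDiag_mul_Emat (A : Matrix (Fin (2*r)) (Fin (2*r)) ℝ) (B : Matrix (Fin m) (Fin m) ℝ) :
    _root_.blockDiag r m A B * Emat r m = Emat r m * A := by
  ext i j
  rw [Matrix.mul_apply, Matrix.mul_apply]
  refine Fin.addCases (fun i' => ?_) (fun i' => ?_) i <;>
    simp [Emat, _root_.blockDiag, Matrix.mul_apply]
  symm
  refine Finset.sum_eq_zero fun x _ => ?_
  rw [if_neg]
  simp only [Fin.ext_iff, Fin.coe_natAdd, Fin.coe_castAdd]
  omega

lemma Emat_t_mul (A : Matrix (Fin (2*r)) (Fin (2*r)) ℝ) (B : Matrix (Fin m) (Fin m) ℝ) :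
    (Emat r m)ᵀ * _root_.blockDiag r m A B = A * (Emat r m)ᵀ := by
  have := congrArg Matrix.transpose (blockDiag_mul_Emat Aᵀ Bᵀ)
  simpa [Matrix.transpose_mul, _root_.blockDiag_transpose, Matrix.transpose_transpose] using this

lemma chain_decomp (L : ℕ) (U V : ℕ → Matrix (Fin (2*r+m)) (Fin (2*r+m)) ℝ)
    (hU : ∀ l, 1 ≤ l → l ≤ L → (U l)ᵀ * U l = 1 ∧ U l * (U l)ᵀ = 1)
    (hUV : ∀ l, 1 ≤ l → l + 1 ≤ L → V (l+1) = U l)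
    (W : ℕ → Matrix (Fin (2*r + m)) (Fin (2*r + m)) ℝ)
    (Wtil : ℕ → Matrix (Fin (2*r)) (Fin (2*r)) ℝ) (ρ : ℕ → ℝ)
    (hW : ∀ l, 1 ≤ l → l ≤ L → W l = U l * _root_.blockDiag r m (Wtil l) (ρ l • 1) * (V l)ᵀ) :
    ∀ j i, 1 ≤ i → i ≤ j → j ≤ L →
      ∃ s : ℝ, chain W i j
        = U j * _root_.blockDiag r m (chain Wtil i j) (s • 1) * (V i)ᵀ := by
  intro j
  induction j with
  | zero => intro i h1 h2 h3; omega
  | succ j ih =>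
    intro i h1 h2 h3
    rcases Nat.lt_or_ge j i with hji | hji
    · obtain rfl : i = j + 1 := by omega
      exact ⟨ρ (j+1), by rw [chain_self, chain_self, hW (j+1) h1 h3]⟩
    · obtain ⟨s, hs⟩ := ih i h1 hji (by omega)
      refine ⟨ρ (j+1) * s, ?_⟩
      rw [chain_succ W (by omega), chain_succ Wtil (by omega), hs,
        hW (j+1) (by omega) h3, hUV j (by omega) h3]
      have hcan : (U j)ᵀ * U j = 1 := (hU j (by omega) (by omega)).1
      calc U (j+1) * _root_.blockDiag r m (Wtil (j+1)) (ρ (j+1) • 1) * (U j)ᵀ *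
              (U j * _root_.blockDiag r m (chain Wtil i j) (s • 1) * (V i)ᵀ)
          = U (j+1) * (_root_.blockDiag r m (Wtil (j+1)) (ρ (j+1) • 1) *
              (((U j)ᵀ * U j) * (_root_.blockDiag r m (chain Wtil i j) (s • 1) * (V i)ᵀ))) := by
            simp only [Matrix.mul_assoc]
        _ = U (j+1) * (_root_.blockDiag r m (Wtil (j+1)) (ρ (j+1) • 1) *
              _root_.blockDiag r m (chain Wtil i j) (s • 1)) * (V i)ᵀ := by
            rw [hcan, one_mul]; simp only [Matrix.mul_assoc]
        _ = U (j+1) * _root_.blockDiag r m (Wtil (j+1) * chain Wtil i j) ((ρ (j+1) * s) • 1) *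
              (V i)ᵀ := by
            rw [blockDiag_mul, smul_mul_smul_comm, one_mul]

/-- compression of the gradient. For a block-decomposed family,
conjugating the gradient `W_{L:l+1}ᵀ·(W_{L:1} − Φ)·W_{l−1:1}ᵀ` by `U_{l,1}, V_{l,1}`
gives the gradient of the compressed factorization with target `U_{L,1}ᵀ·Φ·V_{1,1}`. -/
theorem statement10
    (r m : ℕ) (hm : 0 < m) (L : ℕ) (hL : 1 ≤ L)
    (Φ : Matrix (Fin (2*r + m)) (Fin (2*r + m)) ℝ)
    (U V : ℕ → Matrix (Fin (2*r + m)) (Fin (2*r + m)) ℝ)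
    (hU : ∀ l, 1 ≤ l → l ≤ L → (U l)ᵀ * U l = 1 ∧ U l * (U l)ᵀ = 1)
    (hV : ∀ l, 1 ≤ l → l ≤ L → (V l)ᵀ * V l = 1 ∧ V l * (V l)ᵀ = 1)
    (hUV : ∀ l, 1 ≤ l → l + 1 ≤ L → V (l+1) = U l)
    (W : ℕ → Matrix (Fin (2*r + m)) (Fin (2*r + m)) ℝ)
    (Wtil : ℕ → Matrix (Fin (2*r)) (Fin (2*r)) ℝ) (ρ : ℕ → ℝ)
    (hW : ∀ l, 1 ≤ l → l ≤ L → W l = U l * blockDiag r m (Wtil l) (ρ l • 1) * (V l)ᵀ) :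
    ∀ l, 1 ≤ l → l ≤ L →
      (cols1 r m (U l))ᵀ
          * ((chain W (l+1) L)ᵀ * (chain W 1 L - Φ) * (chain W 1 (l-1))ᵀ)
          * cols1 r m (V l)
        = (chain Wtil (l+1) L)ᵀ
          * (chain Wtil 1 L - (cols1 r m (U L))ᵀ * Φ * cols1 r m (V 1))
          * (chain Wtil 1 (l-1))ᵀ := by
  intro l hl1 hlL
  have hdec := chain_decomp L U V hU hUV W Wtil ρ hW
  -- decomposition of chain W (l+1) L
  have e1 : ∃ a : ℝ, chain W (l+1) L
      = U L * _root_.blockDiag r m (chain Wtil (l+1) L) (a • 1) * (U l)ᵀ := by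
    rcases eq_or_lt_of_le hlL with heq | hlt
    · subst heq
      refine ⟨1, ?_⟩
      rw [chain_empty W (le_refl _), chain_empty Wtil (le_refl _)]
      rw [one_smul, blockDiag_one, Matrix.mul_one, (hU l hl1 (le_refl _)).2]
    · obtain ⟨a, ha⟩ := hdec L (l+1) (by omega) (by omega) (le_refl L)
      exact ⟨a, by rw [ha, hUV l hl1 (by omega)]⟩
  -- decomposition of chain W 1 L
  obtain ⟨b, e2⟩ := hdec L 1 (le_refl 1) hL (le_refl L)
  -- decomposition of chain W 1 (l-1)
  have e3 : ∃ c : ℝ, chain W 1 (l-1)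
      = V l * _root_.blockDiag r m (chain Wtil 1 (l-1)) (c • 1) * (V 1)ᵀ := by
    rcases Nat.lt_or_ge l 2 with h2 | h2
    · obtain rfl : l = 1 := by omega
      refine ⟨1, ?_⟩
      rw [chain_empty W (by omega), chain_empty Wtil (by omega)]
      rw [one_smul, blockDiag_one, Matrix.mul_one, (hV 1 (le_refl _) hL).2]
    · obtain ⟨c, hc⟩ := hdec (l-1) 1 (le_refl 1) (by omega) (by omega)
      refine ⟨c, ?_⟩
      rw [hc]
      have := hUV (l-1) (by omega) (by omega : (l-1) + 1 ≤ L)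
      rw [show l - 1 + 1 = l from by omega] at this
      rw [this]
  obtain ⟨a, e1⟩ := e1
  obtain ⟨c, e3⟩ := e3
  -- cancellation helpers
  have cUl : ∀ M : Matrix (Fin (2*r+m)) (Fin (2*r)) ℝ, (U l)ᵀ * (U l * M) = M := fun M => by
    rw [← Matrix.mul_assoc, (hU l hl1 hlL).1, Matrix.one_mul]
  have cUL : ∀ M : Matrix (Fin (2*r+m)) (Fin (2*r)) ℝ, (U L)ᵀ * (U L * M) = M := fun M => by
    rw [← Matrix.mul_assoc, (hU L hL (le_refl L)).1, Matrix.one_mul]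
  have cV1 : ∀ M : Matrix (Fin (2*r+m)) (Fin (2*r)) ℝ, (V 1)ᵀ * (V 1 * M) = M := fun M => by
    rw [← Matrix.mul_assoc, (hV 1 (le_refl 1) hL).1, Matrix.one_mul]
  have cVl : ∀ M : Matrix (Fin (2*r+m)) (Fin (2*r)) ℝ, (V l)ᵀ * (V l * M) = M := fun M => by
    rw [← Matrix.mul_assoc, (hV l hl1 hlL).1, Matrix.one_mul]
  -- E helpers
  have hE : ∀ (A : Matrix (Fin (2*r)) (Fin (2*r)) ℝ) (B : Matrix (Fin m) (Fin m) ℝ)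
      (N : Matrix (Fin (2*r)) (Fin (2*r)) ℝ),
      _root_.blockDiag r m A B * (Emat r m * N) = Emat r m * (A * N) := fun A B N => by
    rw [← Matrix.mul_assoc, blockDiag_mul_Emat, Matrix.mul_assoc]
  have hEt : ∀ (A : Matrix (Fin (2*r)) (Fin (2*r)) ℝ) (B : Matrix (Fin m) (Fin m) ℝ)
      (M : Matrix (Fin (2*r+m)) (Fin (2*r)) ℝ),
      (Emat r m)ᵀ * (_root_.blockDiag r m A B * M) = A * ((Emat r m)ᵀ * M) := fun A B M => by
    rw [← Matrix.mul_assoc, Emat_t_mul, Matrix.mul_assoc]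
  have hEE : ∀ N : Matrix (Fin (2*r)) (Fin (2*r)) ℝ,
      (Emat r m)ᵀ * (Emat r m * N) = N := fun N => by
    rw [← Matrix.mul_assoc, Emat_tE, Matrix.one_mul]
  rw [e1, e2, e3]
  simp only [cols1_eq]
  simp only [Matrix.transpose_mul, _root_.blockDiag_transpose, Matrix.transpose_smul,
    Matrix.transpose_one, Matrix.transpose_transpose, Matrix.mul_sub, Matrix.sub_mul, Matrix.mul_assoc]
  simp only [cUl, cUL, cV1, cVl]
  simp only [blockDiag_mul_Emat, hE, hEt, hEE]
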